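/- Let Ex = [1, k] = {1, 2, …, k} for some k ≥ 1 and let G be a finite graph. Define W ⊆ V(G) as the result of repeatedly deleting any vertex whose degree in the current induced subgraph is at most k, until no such vertex remains. Then (1) E(G[W]) is a valid Ex-anti-factor solution (every vertex has degree 0 or ≥ k+1 in it), (2) every Ex-anti-factor solution S ⊆ E(G) satisfies S ⊆ E(G[W]), and hence (3) E(G[W]) is the unique maximum Ex-anti-factor solution. -/

import Mathlib

open scoped Classical

/-- Let `Ex = [1,k]`, `k ≥ 1`, and let `W` be the result of repeatedly
deleting vertices of degree at most `k` (equivalently, the largest vertex set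
on which the induced subgraph has minimum degree `≥ k+1`). Then the edge set
`E(G[W])` of the induced subgraph on `W` is a valid `Ex`-anti-factor solution,
every `Ex`-anti-factor solution is contained in it, and hence it is the unique
maximum `Ex`-anti-factor solution. -/
theorem stmt14 {V : Type*} [Fintype V] [DecidableEq V] (G : SimpleGraph V)
    [DecidableRel G.Adj] (k : ℕ) (hk : 1 ≤ k)
    (W : Set V)
    (hW : W = {v | ∃ T : Set V, v ∈ T ∧
      ∀ u ∈ T, k + 1 ≤ {w | w ∈ T ∧ G.Adj u w}.ncard})
    (EW : Finset (Sym2 V))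
    (hEW : EW = G.edgeFinset.filter (fun e => ∀ v ∈ e, v ∈ W)) :
    (∀ v : V, (EW.filter (fun e => v ∈ e)).card ∉ Finset.Icc 1 k) ∧
    (∀ S ⊆ G.edgeFinset,
      (∀ v : V, (S.filter (fun e => v ∈ e)).card ∉ Finset.Icc 1 k) → S ⊆ EW) ∧
    (∀ S ⊆ G.edgeFinset,
      (∀ v : V, (S.filter (fun e => v ∈ e)).card ∉ Finset.Icc 1 k) →
        S.card ≤ EW.card ∧ (S.card = EW.card → S = EW)) := by
  classical
  -- W itself satisfies the defining property
  have hWprop : ∀ u ∈ W, k + 1 ≤ {w | w ∈ W ∧ G.Adj u w}.ncard := by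
    intro u hu
    rw [hW] at hu
    obtain ⟨T, huT, hT⟩ := hu
    refine le_trans (hT u huT) (Set.ncard_le_ncard ?_ (Set.toFinite _))
    rintro w ⟨hwT, hadj⟩
    exact ⟨hW ▸ (⟨T, hwT, hT⟩ : w ∈ {v | ∃ T : Set V, v ∈ T ∧
      ∀ u ∈ T, k + 1 ≤ {w | w ∈ T ∧ G.Adj u w}.ncard}), hadj⟩
  -- part (2)
  have hsub : ∀ S ⊆ G.edgeFinset,
      (∀ v : V, (S.filter (fun e => v ∈ e)).card ∉ Finset.Icc 1 k) → S ⊆ EW := by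
    intro S hS hsol e he
    rw [hEW, Finset.mem_filter]
    refine ⟨hS he, ?_⟩
    intro v hv
    rw [hW]
    refine ⟨{x | ∃ e ∈ S, x ∈ e}, ⟨e, he, hv⟩, ?_⟩
    rintro u ⟨e', he', hu'⟩
    have h1 : 1 ≤ (S.filter (fun e => u ∈ e)).card :=
      Finset.card_pos.mpr ⟨e', Finset.mem_filter.mpr ⟨he', hu'⟩⟩
    have hdeg : k + 1 ≤ (S.filter (fun e => u ∈ e)).card := by
      have h2 := hsol u
      simp only [Finset.mem_Icc, not_and, not_le] at h2
      exact h2 h1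
    refine le_trans hdeg ?_
    rw [Set.ncard_eq_toFinset_card']
    apply Finset.card_le_card_of_injOn
      (fun e => if h : u ∈ e then Sym2.Mem.other' h else u)
    · intro a ha
      rw [Finset.mem_coe, Finset.mem_filter] at ha
      obtain ⟨haS, hua⟩ := ha
      simp only [dif_pos hua]
      rw [Finset.mem_coe, Set.mem_toFinset]
      constructor
      · exact ⟨a, haS, Sym2.other_mem' hua⟩
      · have hspec := Sym2.other_spec' hua
        have haE : a ∈ G.edgeSet := SimpleGraph.mem_edgeFinset.mp (hS haS)
        rw [← hspec] at haE
        exact haE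
    · intro a ha b hb hab
      rw [Finset.mem_coe, Finset.mem_filter] at ha hb
      simp only [dif_pos ha.2, dif_pos hb.2] at hab
      rw [← Sym2.other_spec' ha.2, ← Sym2.other_spec' hb.2, hab]
  refine ⟨?_, hsub, ?_⟩
  · -- part (1)
    intro v
    by_cases hvW : v ∈ W
    · have hcard : k + 1 ≤ (EW.filter (fun e => v ∈ e)).card := by
        refine le_trans (hWprop v hvW) ?_
        rw [Set.ncard_eq_toFinset_card']
        apply Finset.card_le_card_of_injOn (fun w => s(v, w))
        · intro w hw
          rw [Finset.mem_coe, Set.mem_toFinset] at hw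
          obtain ⟨hwW, hadj⟩ := hw
          rw [Finset.mem_coe, Finset.mem_filter, hEW, Finset.mem_filter]
          refine ⟨⟨SimpleGraph.mem_edgeFinset.mpr hadj, ?_⟩, Sym2.mem_mk_left v w⟩
          intro x hx
          rw [Sym2.mem_iff] at hx
          rcases hx with rfl | rfl
          · exact hvW
          · exact hwW
        · intro a _ b _ hab
          simpa using (Sym2.congr_right.mp hab)
      simp only [Finset.mem_Icc, not_and, not_le]
      intro _
      omega
    · have : EW.filter (fun e => v ∈ e) = ∅ := by
        rw [Finset.filter_eq_empty_iff]
        intro e he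
        rw [hEW, Finset.mem_filter] at he
        intro hv
        exact hvW (he.2 v hv)
      rw [this]
      simp
  · -- part (3)
    intro S hS hsol
    have hSW := hsub S hS hsol
    exact ⟨Finset.card_le_card hSW,
      fun hcard => Finset.eq_of_subset_of_card_le hSW (le_of_eq hcard.symm)⟩
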